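/- Let μ : S(h_L) → S(h_M) be a Heyting algebra morphism and define μ*_P(u), for u ∈ h_M(P), as the L-evaluation dual to the distributive lattice morphism ev_u ∘ μ ∘ ι_L : D(L) → D(P). Then for every X ∈ S(h_L) and u ∈ h_M(P): μ*_P(u) ∈ X_P if and only if u ∈ μ(X)_P. -/

import Mathlib

/-- A finite rooted poset: a finite partial order with a greatest element (the root). -/
structure FRP : Type 1 where
  carrier : Type
  [po : PartialOrder carrier]
  [fin : Finite carrier]
  root : carrier
  le_root : ∀ x : carrier, x ≤ root

attribute [instance] FRP.po FRP.fin

/-- The downset of a point, as a finite rooted poset. -/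
def FRP.down (P : FRP) (p : P.carrier) : FRP where
  carrier := {x : P.carrier // x ≤ p}
  root := ⟨p, le_refl p⟩
  le_root := fun x => x.2

/-- An `L`-evaluation: a monotone map from a finite rooted poset into `L`. -/
structure Eval (L : Type) [PartialOrder L] : Type 1 where
  P : FRP
  map : P.carrier → L
  mono : Monotone map

variable {L : Type} [PartialOrder L]

/-- Restriction of an evaluation to the downset of a point. -/
def Eval.restrict (u : Eval L) (p : u.P.carrier) : Eval L where
  P := u.P.down p
  map := fun x => u.map x.1
  mono := fun _ _ h => u.mono h

/-- The value of an evaluation at the root of its domain. -/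
def Eval.rootVal (u : Eval L) : L := u.map u.P.root

/-- The relations `∼ₙ` on `L`-evaluations. -/
def sim (L : Type) [PartialOrder L] : ℕ → Eval L → Eval L → Prop
  | 0 => fun u v => u.rootVal = v.rootVal
  | n+1 => fun u v =>
      (∀ p, ∃ q, sim L n (u.restrict p) (v.restrict q)) ∧
      (∀ q, ∃ p, sim L n (v.restrict q) (u.restrict p))

/-- The relations `≤ₙ`: `lev L n v u` means `v ≤ₙ u`. -/
def lev (L : Type) [PartialOrder L] : ℕ → Eval L → Eval L → Prop
  | 0 => fun v u => v.rootVal ≤ u.rootVal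
  | n+1 => fun v u => ∀ q, ∃ p, sim L n (v.restrict q) (u.restrict p)

/-- `S` is a subpresheaf of `h_L`: closed under restriction. -/
def IsSub (L : Type) [PartialOrder L] (S : Set (Eval L)) : Prop :=
  ∀ u ∈ S, ∀ p, u.restrict p ∈ S

/-- `S` has b-index `n`: closed under `∼ₙ`. -/
def BIndex (L : Type) [PartialOrder L] (n : ℕ) (S : Set (Eval L)) : Prop :=
  ∀ u ∈ S, ∀ v, sim L n u v → v ∈ S

/-- `S` has b≤-index `n`: closed under being `≤ₙ`-below a member. -/
def BleIndex (L : Type) [PartialOrder L] (n : ℕ) (S : Set (Eval L)) : Prop :=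
  ∀ u ∈ S, ∀ v, lev L n v u → v ∈ S

/-- `↓ₙ u`. -/
def downSet (L : Type) [PartialOrder L] (n : ℕ) (u : Eval L) : Set (Eval L) :=
  {v | lev L n v u}

/-- Pointwise description of Heyting implication of subpresheaves. -/
def himpPt (L : Type) [PartialOrder L] (S T : Set (Eval L)) : Set (Eval L) :=
  {u | ∀ p, u.restrict p ∈ S → u.restrict p ∈ T}

/-- The embedding of downward closed subsets of `L` into subpresheaves. -/
def iota (L : Type) [PartialOrder L] (d : Set L) : Set (Eval L) :=
  {u | u.rootVal ∈ d}

/-- Membership in the Heyting algebra `S(h_L)`: subpresheaves with a b-index. -/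
def InS (L : Type) [PartialOrder L] (S : Set (Eval L)) : Prop :=
  IsSub L S ∧ ∃ n, BIndex L n S

/-- `ev_f`. -/
def evalMap (L : Type) [PartialOrder L] (f : Eval L) (X : Set (Eval L)) : Set f.P.carrier :=
  {p | f.restrict p ∈ X}

/-- Heyting implication of downward closed subsets of a poset. -/
def himpD {M : Type} [PartialOrder M] (a b : Set M) : Set M :=
  {p | ∀ q ≤ p, q ∈ a → q ∈ b}

section Basics
variable {L : Type} [PartialOrder L]

theorem sim_refl : ∀ (n : ℕ) (u : Eval L), sim L n u u
  | 0, _ => rfl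
  | n+1, u => ⟨fun p => ⟨p, sim_refl n _⟩, fun p => ⟨p, sim_refl n _⟩⟩

theorem sim_symm : ∀ (n : ℕ) {u v : Eval L}, sim L n u v → sim L n v u
  | 0, _, _, h => h.symm
  | _+1, _, _, h => ⟨h.2, h.1⟩

theorem sim_trans : ∀ (n : ℕ) {a b c : Eval L}, sim L n a b → sim L n b c → sim L n a c
  | 0, _, _, _, h1, h2 => h1.trans h2
  | n+1, _, _, _, h1, h2 =>
    ⟨fun p =>
      let ⟨q, hq⟩ := h1.1 p
      let ⟨r, hr⟩ := h2.1 q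
      ⟨r, sim_trans n hq hr⟩,
     fun r =>
      let ⟨q, hq⟩ := h2.2 r
      let ⟨p, hp⟩ := h1.2 q
      ⟨p, sim_trans n hq hp⟩⟩

theorem sim_rootVal : ∀ (n : ℕ) {u v : Eval L}, sim L n u v → u.rootVal = v.rootVal
  | 0, _, _, h => h
  | n+1, u, v, h => by
    obtain ⟨q, hq⟩ := h.1 u.P.root
    obtain ⟨p, hp⟩ := h.2 v.P.root
    refine le_antisymm ?_ ?_
    · calc u.rootVal = v.map q := sim_rootVal n hq
        _ ≤ v.rootVal := v.mono (v.P.le_root q)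
    · calc v.rootVal = u.map p := sim_rootVal n hp
        _ ≤ u.rootVal := u.mono (u.P.le_root p)

theorem sim_mono : ∀ (n : ℕ) {u v : Eval L}, sim L (n+1) u v → sim L n u v
  | 0, _, _, h => sim_rootVal 1 h
  | n+1, _, _, h =>
    ⟨fun p => (h.1 p).imp fun _ => sim_mono n, fun q => (h.2 q).imp fun _ => sim_mono n⟩

theorem sim_of_le {m n : ℕ} (h : m ≤ n) {u v : Eval L} (hs : sim L n u v) : sim L m u v := by
  induction n with
  | zero => exact (Nat.le_zero.mp h) ▸ hs
  | succ n ih =>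
    rcases Nat.lt_or_ge m (n+1) with h' | h'
    · exact ih (Nat.lt_succ_iff.mp h') (sim_mono n hs)
    · exact (Nat.le_antisymm h h') ▸ hs

theorem lev_refl : ∀ (n : ℕ) (u : Eval L), lev L n u u
  | 0, _ => le_refl _
  | n+1, _ => fun q => ⟨q, sim_refl n _⟩

theorem sim_lev : ∀ (n : ℕ) {u v : Eval L}, sim L n u v → lev L n u v
  | 0, _, _, h => le_of_eq h
  | _+1, _, _, h => h.1

theorem lev_trans : ∀ (n : ℕ) {a b c : Eval L}, lev L n a b → lev L n b c → lev L n a c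
  | 0, _, _, _, h1, h2 => le_trans h1 h2
  | n+1, _, _, _, h1, h2 => fun q =>
      let ⟨p, hp⟩ := h1 q
      let ⟨r, hr⟩ := h2 p
      ⟨r, sim_trans n hp hr⟩

theorem lev_rootVal : ∀ (n : ℕ) {v u : Eval L}, lev L n v u → v.rootVal ≤ u.rootVal
  | 0, _, _, h => h
  | n+1, v, u, h => by
    obtain ⟨p, hp⟩ := h v.P.root
    calc v.rootVal = u.map p := sim_rootVal n hp
      _ ≤ u.rootVal := u.mono (u.P.le_root p)

theorem sim_iff_lev (n : ℕ) {u v : Eval L} : sim L n u v ↔ lev L n u v ∧ lev L n v u := by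
  cases n with
  | zero => exact ⟨fun h => ⟨le_of_eq h, le_of_eq h.symm⟩, fun h => le_antisymm h.1 h.2⟩
  | succ n => exact Iff.rfl

end Basics
section Isos
variable {L : Type} [PartialOrder L]

theorem iso_root {P Q : FRP} (e : P.carrier ≃o Q.carrier) : e P.root = Q.root := by
  refine le_antisymm (Q.le_root _) ?_
  conv_lhs => rw [← e.apply_symm_apply Q.root]
  exact e.monotone (P.le_root _)

def isoDown {P Q : FRP} (e : P.carrier ≃o Q.carrier) (p : P.carrier) :
    (P.down p).carrier ≃o (Q.down (e p)).carrier where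
  toFun x := ⟨e x.1, e.monotone x.2⟩
  invFun y := ⟨e.symm y.1, by
    have h : e (e.symm y.1) ≤ e p := by rw [e.apply_symm_apply]; exact y.2
    exact e.le_iff_le.mp h⟩
  left_inv x := Subtype.ext (e.symm_apply_apply _)
  right_inv y := Subtype.ext (e.apply_symm_apply _)
  map_rel_iff' := by intro a b; exact e.le_iff_le

theorem sim_of_iso : ∀ (n : ℕ) (u v : Eval L) (e : u.P.carrier ≃o v.P.carrier),
    (∀ x, v.map (e x) = u.map x) → sim L n u v
  | 0, u, v, e, he => by
    show u.rootVal = v.rootVal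
    rw [Eval.rootVal, Eval.rootVal, ← iso_root e, he]
  | n+1, u, v, e, he =>
    ⟨fun p => ⟨e p, sim_of_iso n _ _ (isoDown e p) (fun x => he x.1)⟩,
     fun q => ⟨e.symm q, by
      have h := sim_of_iso n (u.restrict (e.symm q)) (v.restrict (e (e.symm q)))
        (isoDown e _) (fun x => he x.1)
      rw [e.apply_symm_apply] at h
      exact sim_symm n h⟩⟩

def rootIso (u : Eval L) : (u.P.down u.P.root).carrier ≃o u.P.carrier where
  toFun x := x.1
  invFun a := ⟨a, u.P.le_root a⟩
  left_inv x := rfl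
  right_inv a := rfl
  map_rel_iff' := Iff.rfl

theorem sim_restrict_root (u : Eval L) (n : ℕ) : sim L n (u.restrict u.P.root) u :=
  sim_of_iso n _ _ (rootIso u) (fun _ => rfl)

def restrictRestrictIso (u : Eval L) (p : u.P.carrier) (q : (u.P.down p).carrier) :
    ((u.P.down p).down q).carrier ≃o (u.P.down q.1).carrier where
  toFun z := ⟨z.1.1, z.2⟩
  invFun x := ⟨⟨x.1, le_trans x.2 q.2⟩, x.2⟩
  left_inv z := rfl
  right_inv x := rfl
  map_rel_iff' := Iff.rfl

theorem sim_restrict_restrict (u : Eval L) (p : u.P.carrier) (q : (u.P.down p).carrier)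
    (n : ℕ) : sim L n ((u.restrict p).restrict q) (u.restrict q.1) :=
  sim_of_iso n _ _ (restrictRestrictIso u p q) (fun _ => rfl)

theorem mem_iff_of_sim {S : Set (Eval L)} (hS : InS L S) {a b : Eval L}
    (h : ∀ n, sim L n a b) : a ∈ S ↔ b ∈ S := by
  obtain ⟨-, n, hB⟩ := hS
  exact ⟨fun ha => hB a ha b (h n), fun hb => hB b hb a (sim_symm n (h n))⟩

end Isos
section Glue
variable {L : Type} [PartialOrder L]

def glueLE (u v : Eval L) : u.P.carrier ⊕ v.P.carrier → u.P.carrier ⊕ v.P.carrier → Prop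
  | .inl a, .inl b => a ≤ b
  | .inr a, .inr b => a ≤ b
  | .inr _, .inl b => u.P.root ≤ b
  | .inl _, .inr _ => False

def glueFRP (u v : Eval L) : FRP where
  carrier := u.P.carrier ⊕ v.P.carrier
  po :=
    { le := glueLE u v
      lt := fun a b => glueLE u v a b ∧ ¬ glueLE u v b a
      lt_iff_le_not_ge := fun _ _ => Iff.rfl
      le_refl := by rintro (a|a) <;> exact le_refl a
      le_trans := by
        rintro (a|a) (b|b) (c|c) h1 h2 <;>
          first
            | exact le_trans h1 h2
            | exact h2
            | exact (h1 : False).elim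
            | exact (h2 : False).elim
      le_antisymm := by
        rintro (a|a) (b|b) h1 h2
        · exact congrArg Sum.inl (le_antisymm h1 h2)
        · exact (h1 : False).elim
        · exact (h2 : False).elim
        · exact congrArg Sum.inr (le_antisymm h1 h2) }
  fin := inferInstance
  root := .inl u.P.root
  le_root := by
    rintro (a|a)
    · exact u.P.le_root a
    · exact le_refl _

def glue (u v : Eval L) (hle : v.rootVal ≤ u.rootVal) : Eval L where
  P := glueFRP u v
  map := Sum.elim u.map v.map
  mono := by
    rintro (a|a) (b|b) h
    · exact u.mono h
    · exact (h : False).elim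
    · calc v.map a ≤ v.rootVal := v.mono (v.P.le_root a)
        _ ≤ u.rootVal := hle
        _ ≤ u.map b := u.mono h
    · exact v.mono h

def glueInrIso (u v : Eval L) (hle : v.rootVal ≤ u.rootVal) (a : v.P.carrier) :
    ((glue u v hle).P.down (Sum.inr a)).carrier ≃o (v.P.down a).carrier where
  toFun z := match z with
    | ⟨.inr x, h⟩ => ⟨x, h⟩
    | ⟨.inl _, h⟩ => ((h : False)).elim
  invFun y := ⟨Sum.inr y.1, y.2⟩
  left_inv := by
    rintro ⟨(x|x), h⟩
    · exact (h : False).elim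
    · rfl
  right_inv y := rfl
  map_rel_iff' := by
    rintro ⟨(x|x), hx⟩ ⟨(y|y), hy⟩
    · exact (hx : False).elim
    · exact (hx : False).elim
    · exact (hy : False).elim
    · exact Iff.rfl

def glueInlIso (u v : Eval L) (hle : v.rootVal ≤ u.rootVal) (a : u.P.carrier)
    (ha : a ≠ u.P.root) :
    ((glue u v hle).P.down (Sum.inl a)).carrier ≃o (u.P.down a).carrier where
  toFun z := match z with
    | ⟨.inl x, h⟩ => ⟨x, h⟩
    | ⟨.inr _, h⟩ => absurd (le_antisymm (u.P.le_root a) h) ha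
  invFun y := ⟨Sum.inl y.1, y.2⟩
  left_inv := by
    rintro ⟨(x|x), h⟩
    · rfl
    · exact absurd (le_antisymm (u.P.le_root a) h) ha
  right_inv y := rfl
  map_rel_iff' := by
    rintro ⟨(x|x), hx⟩ ⟨(y|y), hy⟩
    · exact Iff.rfl
    · exact absurd (le_antisymm (u.P.le_root a) hy) ha
    · exact absurd (le_antisymm (u.P.le_root a) hx) ha
    · exact absurd (le_antisymm (u.P.le_root a) hx) ha

theorem sim_glue_inr {u v : Eval L} (hle : v.rootVal ≤ u.rootVal) (a : v.P.carrier) (n : ℕ) :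
    sim L n ((glue u v hle).restrict (Sum.inr a)) (v.restrict a) := by
  refine sim_of_iso n _ _ (glueInrIso u v hle a) ?_
  rintro ⟨(x|x), h⟩
  · exact (h : False).elim
  · rfl

theorem sim_glue_inl {u v : Eval L} (hle : v.rootVal ≤ u.rootVal) (a : u.P.carrier)
    (ha : a ≠ u.P.root) (n : ℕ) :
    sim L n ((glue u v hle).restrict (Sum.inl a)) (u.restrict a) := by
  refine sim_of_iso n _ _ (glueInlIso u v hle a ha) ?_
  rintro ⟨(x|x), h⟩
  · rfl
  · exact absurd (le_antisymm (u.P.le_root a) h) ha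

theorem sim_glue {u v : Eval L} (hle : v.rootVal ≤ u.rootVal) :
    ∀ (k n : ℕ), k ≤ n → lev L n v u → sim L k (glue u v hle) u := by
  intro k
  induction k with
  | zero => intro n _ _; rfl
  | succ k ih =>
    intro n hkn hlev
    obtain ⟨m, rfl⟩ : ∃ m, n = m + 1 := ⟨n - 1, by omega⟩
    have root_case : sim L k ((glue u v hle).restrict (Sum.inl u.P.root)) (u.restrict u.P.root) := by
      have h1 : sim L k ((glue u v hle).restrict (glue u v hle).P.root) (glue u v hle) :=
        sim_restrict_root _ k
      have h2 : sim L k (glue u v hle) u := ih (m+1) (by omega) hlev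
      have h3 : sim L k u (u.restrict u.P.root) := sim_symm k (sim_restrict_root u k)
      exact sim_trans k (sim_trans k h1 h2) h3
    constructor
    · rintro (a|a)
      · by_cases ha : a = u.P.root
        · subst ha; exact ⟨u.P.root, root_case⟩
        · exact ⟨a, sim_glue_inl hle a ha k⟩
      · obtain ⟨p, hp⟩ := hlev a
        exact ⟨p, sim_trans k (sim_glue_inr hle a k) (sim_of_le (by omega) hp)⟩
    · intro p
      by_cases hp : p = u.P.root
      · subst hp; exact ⟨Sum.inl u.P.root, sim_symm k root_case⟩
      · exact ⟨Sum.inl p, sim_symm k (sim_glue_inl hle p hp k)⟩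

theorem bleIndex_of_isSub_bIndex {X : Set (Eval L)} {n : ℕ}
    (hSub : IsSub L X) (hB : BIndex L n X) : BleIndex L n X := by
  intro x hx y hy
  have hle : y.rootVal ≤ x.rootVal := lev_rootVal n hy
  have hz : sim L n (glue x y hle) x := sim_glue hle n n le_rfl hy
  have hzX : glue x y hle ∈ X := hB x hx _ (sim_symm n hz)
  have h2 : (glue x y hle).restrict (Sum.inr y.P.root) ∈ X := hSub _ hzX _
  exact hB _ h2 y (sim_trans n (sim_glue_inr hle y.P.root n) (sim_restrict_root y n))

end Glue
section Classes
variable {L : Type} [PartialOrder L]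

def simSetoid (L : Type) [PartialOrder L] (n : ℕ) : Setoid (Eval L) :=
  ⟨sim L n, ⟨sim_refl n, fun h => sim_symm n h, fun h h' => sim_trans n h h'⟩⟩

theorem finite_quotient (L : Type) [PartialOrder L] [Finite L] :
    ∀ n : ℕ, Finite (Quotient (simSetoid L n))
  | 0 => Finite.of_injective (Quotient.lift Eval.rootVal (fun _ _ h => h))
      (by rintro ⟨a⟩ ⟨b⟩ h; exact Quotient.sound h)
  | n+1 => by
    haveI := finite_quotient L n
    refine Finite.of_injective
      (Quotient.lift
        (fun x => {c : Quotient (simSetoid L n) | ∃ p, c = Quotient.mk (simSetoid L n) (x.restrict p)})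
        ?_) ?_
    · intro a b hab
      ext c
      simp only [Set.mem_setOf_eq]
      constructor
      · rintro ⟨p, rfl⟩
        obtain ⟨q, hq⟩ := hab.1 p
        exact ⟨q, Quotient.sound hq⟩
      · rintro ⟨q, rfl⟩
        obtain ⟨p, hp⟩ := hab.2 q
        exact ⟨p, Quotient.sound hp⟩
    · rintro ⟨a⟩ ⟨b⟩ h
      refine Quotient.sound ?_
      have h' := Set.ext_iff.mp h
      constructor
      · intro p
        obtain ⟨q, hq⟩ := (h' (Quotient.mk (simSetoid L n) (a.restrict p))).mp ⟨p, rfl⟩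
        exact ⟨q, Quotient.exact hq⟩
      · intro q
        obtain ⟨p, hp⟩ := (h' (Quotient.mk (simSetoid L n) (b.restrict q))).mpr ⟨q, rfl⟩
        exact ⟨p, Quotient.exact hp⟩

theorem out_sim (n : ℕ) (a : Eval L) :
    sim L n (Quotient.mk (simSetoid L n) a).out a := by
  have h := Quotient.exact (Quotient.out_eq (Quotient.mk (simSetoid L n) a))
  exact h

theorem lev_restrict : ∀ (n : ℕ) {v x : Eval L} (p : v.P.carrier),
    lev L n v x → lev L n (v.restrict p) x
  | 0, v, _, p, h => le_trans (v.mono (v.P.le_root p)) h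
  | n+1, v, _, p, h => fun q =>
      let ⟨r, hr⟩ := h q.1
      ⟨r, sim_trans n (sim_restrict_restrict v p q n) hr⟩

theorem isSub_downSet (n : ℕ) (x : Eval L) : IsSub L (downSet L n x) :=
  fun v hv p => lev_restrict n p hv

theorem bIndex_downSet (n : ℕ) (x : Eval L) : BIndex L n (downSet L n x) :=
  fun a ha b hb => lev_trans n (sim_lev n (sim_symm n hb)) ha

theorem inS_downSet (n : ℕ) (x : Eval L) : InS L (downSet L n x) :=
  ⟨isSub_downSet n x, n, bIndex_downSet n x⟩

theorem bIndex_le {S : Set (Eval L)} {n m : ℕ} (h : n ≤ m) (hB : BIndex L n S) :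
    BIndex L m S :=
  fun a ha b hb => hB a ha b (sim_of_le h hb)

theorem inS_empty : InS L (∅ : Set (Eval L)) :=
  ⟨fun _ h => h.elim, 0, fun _ h => h.elim⟩

theorem inS_univ : InS L (Set.univ : Set (Eval L)) :=
  ⟨fun _ _ _ => trivial, 0, fun _ _ _ _ => trivial⟩

theorem inS_inter {S T : Set (Eval L)} (hS : InS L S) (hT : InS L T) : InS L (S ∩ T) := by
  obtain ⟨s1, nS, s2⟩ := hS
  obtain ⟨t1, nT, t2⟩ := hT
  exact ⟨fun a ha p => ⟨s1 a ha.1 p, t1 a ha.2 p⟩, max nS nT,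
    fun a ha b hb => ⟨bIndex_le (le_max_left _ _) s2 a ha.1 b hb,
      bIndex_le (le_max_right _ _) t2 a ha.2 b hb⟩⟩

theorem inS_union {S T : Set (Eval L)} (hS : InS L S) (hT : InS L T) : InS L (S ∪ T) := by
  obtain ⟨s1, nS, s2⟩ := hS
  obtain ⟨t1, nT, t2⟩ := hT
  refine ⟨fun a ha p => ha.imp (fun h => s1 a h p) (fun h => t1 a h p), max nS nT,
    fun a ha b hb => ha.imp (fun h => bIndex_le (le_max_left _ _) s2 a h b hb)
      (fun h => bIndex_le (le_max_right _ _) t2 a h b hb)⟩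

theorem inS_iota {d : Set L} (hd : IsLowerSet d) : InS L (iota L d) := by
  refine ⟨fun a ha p => hd (a.mono (a.P.le_root p)) ha, 0, fun a ha b hb => ?_⟩
  show b.rootVal ∈ d
  rw [← hb]
  exact ha

theorem inS_himp {S T : Set (Eval L)} (hS : InS L S) (hT : InS L T) :
    InS L (himpPt L S T) := by
  obtain ⟨hSsub, nS, hSB⟩ := hS
  obtain ⟨hTsub, nT, hTB⟩ := hT
  constructor
  · intro a ha p q hq
    have h1 : (a.restrict p).restrict q ∈ S ↔ a.restrict q.1 ∈ S :=
      mem_iff_of_sim ⟨hSsub, nS, hSB⟩ (fun n => sim_restrict_restrict a p q n)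
    have h2 : (a.restrict p).restrict q ∈ T ↔ a.restrict q.1 ∈ T :=
      mem_iff_of_sim ⟨hTsub, nT, hTB⟩ (fun n => sim_restrict_restrict a p q n)
    exact h2.mpr (ha q.1 (h1.mp hq))
  · refine ⟨max nS nT + 1, fun a ha b hb q hq => ?_⟩
    obtain ⟨p, hs⟩ := hb.2 q
    have haS : a.restrict p ∈ S :=
      bIndex_le (le_max_left nS nT) hSB _ hq _ hs
    have haT : a.restrict p ∈ T := ha p haS
    exact bIndex_le (le_max_right nS nT) hTB _ haT _ (sim_symm _ hs)

end Classes
section Good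
variable {L M : Type} [PartialOrder L] [PartialOrder M]

structure MuHyp (L M : Type) [PartialOrder L] [PartialOrder M]
    (mu : Set (Eval L) → Set (Eval M)) : Prop where
  inS : ∀ X, InS L X → InS M (mu X)
  inter : ∀ S T, InS L S → InS L T → mu (S ∩ T) = mu S ∩ mu T
  union : ∀ S T, InS L S → InS L T → mu (S ∪ T) = mu S ∪ mu T
  himp : ∀ S T, InS L S → InS L T → mu (himpPt L S T) = himpPt M (mu S) (mu T)
  bot : mu ∅ = ∅
  top : mu Set.univ = Set.univ

def GoodA (mu : Set (Eval L) → Set (Eval M)) (u : Eval M) (wmap : u.P.carrier → L)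
    (wmono : Monotone wmap) (S : Set (Eval L)) : Prop :=
  ∀ p : u.P.carrier, ((⟨u.P, wmap, wmono⟩ : Eval L).restrict p ∈ S ↔ u.restrict p ∈ mu S)

variable {mu : Set (Eval L) → Set (Eval M)} {u : Eval M}
  {wmap : u.P.carrier → L} {wmono : Monotone wmap}

theorem good_empty (H : MuHyp L M mu) : GoodA mu u wmap wmono ∅ := by
  intro p; rw [H.bot]; exact Iff.rfl

theorem good_univ (H : MuHyp L M mu) : GoodA mu u wmap wmono Set.univ := by
  intro p; rw [H.top]; exact ⟨fun _ => trivial, fun _ => trivial⟩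

theorem good_inter (H : MuHyp L M mu) {S T : Set (Eval L)} (hS : InS L S) (hT : InS L T)
    (gS : GoodA mu u wmap wmono S) (gT : GoodA mu u wmap wmono T) :
    GoodA mu u wmap wmono (S ∩ T) := by
  intro p; rw [H.inter S T hS hT]
  exact and_congr (gS p) (gT p)

theorem good_union (H : MuHyp L M mu) {S T : Set (Eval L)} (hS : InS L S) (hT : InS L T)
    (gS : GoodA mu u wmap wmono S) (gT : GoodA mu u wmap wmono T) :
    GoodA mu u wmap wmono (S ∪ T) := by
  intro p; rw [H.union S T hS hT]
  exact or_congr (gS p) (gT p)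

theorem good_himp (H : MuHyp L M mu) {S T : Set (Eval L)} (hS : InS L S) (hT : InS L T)
    (gS : GoodA mu u wmap wmono S) (gT : GoodA mu u wmap wmono T) :
    GoodA mu u wmap wmono (himpPt L S T) := by
  intro p
  rw [H.himp S T hS hT]
  set w : Eval L := ⟨u.P, wmap, wmono⟩ with hw
  constructor
  · intro h q hq
    have hq' : u.restrict q.1 ∈ mu S :=
      (mem_iff_of_sim (H.inS S hS) (fun n => sim_restrict_restrict u p q n)).mp hq
    have h1 : w.restrict q.1 ∈ S := (gS q.1).mpr hq'
    have h2 : (w.restrict p).restrict q ∈ S :=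
      (mem_iff_of_sim hS (fun n => sim_restrict_restrict w p q n)).mpr h1
    have h3 := h q h2
    have h4 : w.restrict q.1 ∈ T :=
      (mem_iff_of_sim hT (fun n => sim_restrict_restrict w p q n)).mp h3
    exact (mem_iff_of_sim (H.inS T hT) (fun n => sim_restrict_restrict u p q n)).mpr
      ((gT q.1).mp h4)
  · intro h q hq
    have hq' : w.restrict q.1 ∈ S :=
      (mem_iff_of_sim hS (fun n => sim_restrict_restrict w p q n)).mp hq
    have h1 : u.restrict q.1 ∈ mu S := (gS q.1).mp hq'
    have h2 : (u.restrict p).restrict q ∈ mu S :=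
      (mem_iff_of_sim (H.inS S hS) (fun n => sim_restrict_restrict u p q n)).mpr h1
    have h3 := h q h2
    have h4 : u.restrict q.1 ∈ mu T :=
      (mem_iff_of_sim (H.inS T hT) (fun n => sim_restrict_restrict u p q n)).mp h3
    exact (mem_iff_of_sim hT (fun n => sim_restrict_restrict w p q n)).mpr ((gT q.1).mpr h4)

theorem good_iota (hdual : ∀ d : Set L, IsLowerSet d → ∀ p : u.P.carrier,
      (wmap p ∈ d ↔ u.restrict p ∈ mu (iota L d)))
    {d : Set L} (hd : IsLowerSet d) : GoodA mu u wmap wmono (iota L d) :=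
  fun p => hdual d hd p

theorem good_sUnion (H : MuHyp L M mu) {s : Set (Set (Eval L))} (hfin : s.Finite)
    (h : ∀ S ∈ s, InS L S ∧ GoodA mu u wmap wmono S) :
    InS L (⋃₀ s) ∧ GoodA mu u wmap wmono (⋃₀ s) := by
  revert h
  refine Set.Finite.induction_on
    (motive := fun s _ => (∀ S ∈ s, InS L S ∧ GoodA mu u wmap wmono S) →
      InS L (⋃₀ s) ∧ GoodA mu u wmap wmono (⋃₀ s)) s hfin ?_ ?_
  · intro _; rw [Set.sUnion_empty]; exact ⟨inS_empty, good_empty H⟩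
  · intro a s ha hs ih h
    rw [Set.sUnion_insert]
    have h1 := h a (Set.mem_insert _ _)
    have h2 := ih (fun S hS => h S (Set.mem_insert_of_mem _ hS))
    exact ⟨inS_union h1.1 h2.1, good_union H h1.1 h2.1 h1.2 h2.2⟩

theorem good_sInter (H : MuHyp L M mu) {s : Set (Set (Eval L))} (hfin : s.Finite)
    (h : ∀ S ∈ s, InS L S ∧ GoodA mu u wmap wmono S) :
    InS L (⋂₀ s) ∧ GoodA mu u wmap wmono (⋂₀ s) := by
  revert h
  refine Set.Finite.induction_on
    (motive := fun s _ => (∀ S ∈ s, InS L S ∧ GoodA mu u wmap wmono S) →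
      InS L (⋂₀ s) ∧ GoodA mu u wmap wmono (⋂₀ s)) s hfin ?_ ?_
  · intro _; rw [Set.sInter_empty]; exact ⟨inS_univ, good_univ H⟩
  · intro a s ha hs ih h
    rw [Set.sInter_insert]
    have h1 := h a (Set.mem_insert _ _)
    have h2 := ih (fun S hS => h S (Set.mem_insert_of_mem _ hS))
    exact ⟨inS_inter h1.1 h2.1, good_inter H h1.1 h2.1 h1.2 h2.2⟩

end Good
section Main
variable {L M : Type} [PartialOrder L] [PartialOrder M]
  {mu : Set (Eval L) → Set (Eval M)} {u : Eval M}
  {wmap : u.P.carrier → L} {wmono : Monotone wmap}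

theorem good_downSet [Finite L] (H : MuHyp L M mu)
    (hdual : ∀ d : Set L, IsLowerSet d → ∀ p : u.P.carrier,
      (wmap p ∈ d ↔ u.restrict p ∈ mu (iota L d))) :
    ∀ (n : ℕ) (x : Eval L), GoodA mu u wmap wmono (downSet L n x) := by
  intro n
  induction n with
  | zero =>
    intro x
    have heq : downSet L 0 x = iota L (Set.Iic x.rootVal) := rfl
    rw [heq]
    exact good_iota hdual (fun _ _ h ha => le_trans h ha)
  | succ n ih =>
    intro x
    haveI hQ : Finite (Quotient (simSetoid L n)) := finite_quotient L n
    set D : Quotient (simSetoid L n) → Set (Eval L) := fun c => downSet L n c.out with hD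
    set NR : Set (Quotient (simSetoid L n)) :=
      {c | ¬ ∃ p : x.P.carrier, sim L n (x.restrict p) c.out} with hNR
    set T : Quotient (simSetoid L n) → Set (Eval L) := fun c =>
      ⋃₀ (D '' {c' | lev L n c'.out c.out ∧ ¬ sim L n c'.out c.out}) with hT
    have hset : downSet L (n+1) x = ⋂₀ ((fun c => himpPt L (D c) (T c)) '' NR) := by
      ext v
      constructor
      · intro hv
        refine Set.mem_sInter.mpr ?_
        rintro Y ⟨c, hcNR, rfl⟩
        intro q hq
        obtain ⟨p, hp⟩ := hv q
        have hout : sim L n (Quotient.mk (simSetoid L n) (v.restrict q)).out (v.restrict q) :=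
          out_sim n _
        refine Set.mem_sUnion.mpr
          ⟨D (Quotient.mk (simSetoid L n) (v.restrict q)), ⟨_, ⟨?_, ?_⟩, rfl⟩, ?_⟩
        · exact lev_trans n (sim_lev n hout) hq
        · intro hsim
          exact hcNR ⟨p, sim_trans n (sim_symm n hp) (sim_trans n (sim_symm n hout) hsim)⟩
        · exact sim_lev n (sim_symm n hout)
      · intro hv q
        have hout : sim L n (Quotient.mk (simSetoid L n) (v.restrict q)).out (v.restrict q) :=
          out_sim n _
        by_cases hreal : ∃ p : x.P.carrier,
            sim L n (x.restrict p) (Quotient.mk (simSetoid L n) (v.restrict q)).out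
        · obtain ⟨p, hp⟩ := hreal
          exact ⟨p, sim_trans n (sim_symm n hout) (sim_symm n hp)⟩
        · have hmem := Set.mem_sInter.mp hv _
            (Set.mem_image_of_mem (fun c => himpPt L (D c) (T c)) (hreal : _ ∈ NR))
          have hDc : v.restrict q ∈ D (Quotient.mk (simSetoid L n) (v.restrict q)) :=
            sim_lev n (sim_symm n hout)
          have hTc := hmem q hDc
          obtain ⟨Y, hYmem, hvY⟩ := hTc
          obtain ⟨c', hc', rfl⟩ := hYmem
          have hlev : lev L n (Quotient.mk (simSetoid L n) (v.restrict q)).out c'.out :=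
            lev_trans n (sim_lev n hout) hvY
          exact absurd ((sim_iff_lev n).mpr ⟨hc'.1, hlev⟩) hc'.2
    rw [hset]
    refine (good_sInter H ((Set.toFinite NR).image _) ?_).2
    rintro Y ⟨c, -, rfl⟩
    have hTgood : InS L (T c) ∧ GoodA mu u wmap wmono (T c) := by
      refine good_sUnion H ((Set.toFinite _).image _) ?_
      rintro Z ⟨c', -, rfl⟩
      exact ⟨inS_downSet n _, ih _⟩
    exact ⟨inS_himp (inS_downSet n _) hTgood.1,
      good_himp H (inS_downSet n _) hTgood.1 (ih _) hTgood.2⟩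

theorem good_of_inS [Finite L] (H : MuHyp L M mu)
    (hdual : ∀ d : Set L, IsLowerSet d → ∀ p : u.P.carrier,
      (wmap p ∈ d ↔ u.restrict p ∈ mu (iota L d)))
    (X : Set (Eval L)) (hX : InS L X) : GoodA mu u wmap wmono X := by
  obtain ⟨hsub, n, hB⟩ := hX
  haveI hQ : Finite (Quotient (simSetoid L n)) := finite_quotient L n
  have hXeq : X = ⋃₀ ((fun c : Quotient (simSetoid L n) => downSet L n c.out) ''
      {c | ∃ x ∈ X, c = Quotient.mk (simSetoid L n) x}) := by
    ext v
    constructor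
    · intro hv
      refine Set.mem_sUnion.mpr ⟨downSet L n (Quotient.mk (simSetoid L n) v).out,
        Set.mem_image_of_mem _ ⟨v, hv, rfl⟩, ?_⟩
      exact sim_lev n (sim_symm n (out_sim n v))
    · intro hv
      obtain ⟨Y, hY, hvY⟩ := hv
      obtain ⟨c, ⟨x, hxX, rfl⟩, rfl⟩ := hY
      have h1 : lev L n v x := lev_trans n hvY (sim_lev n (out_sim n x))
      exact bleIndex_of_isSub_bIndex hsub hB x hxX v h1
  rw [hXeq]
  refine (good_sUnion H ((Set.toFinite _).image _) ?_).2
  rintro Y ⟨c, -, rfl⟩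
  exact ⟨inS_downSet n _, good_downSet H hdual n _⟩

end Main


/-- for a Heyting algebra morphism `μ : S(h_L) → S(h_M)`, an evaluation
`u ∈ h_M(P)`, and `μ*_P(u)` the `L`-evaluation on `P` dual to the lattice morphism
`ev_u ∘ μ ∘ ι_L : D(L) → D(P)`, one has `μ*_P(u) ∈ X_P` iff `u ∈ μ(X)_P`, for every
`X ∈ S(h_L)`. -/
theorem mu_star_membership (L M : Type) [PartialOrder L] [Finite L]
    [PartialOrder M] [Finite M]
    (mu : Set (Eval L) → Set (Eval M))
    (hmuInS : ∀ X : Set (Eval L), InS L X → InS M (mu X))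
    (hmu_inter : ∀ S T : Set (Eval L), InS L S → InS L T → mu (S ∩ T) = mu S ∩ mu T)
    (hmu_union : ∀ S T : Set (Eval L), InS L S → InS L T → mu (S ∪ T) = mu S ∪ mu T)
    (hmu_himp : ∀ S T : Set (Eval L), InS L S → InS L T →
      mu (himpPt L S T) = himpPt M (mu S) (mu T))
    (hmu_bot : mu (∅ : Set (Eval L)) = ∅)
    (hmu_top : mu (Set.univ : Set (Eval L)) = Set.univ)
    (u : Eval M) (w : Eval L) (hP : w.P = u.P)
    (hdual : ∀ d : Set L, IsLowerSet d → ∀ p : u.P.carrier,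
      (w.map (cast (congrArg FRP.carrier hP.symm) p) ∈ d ↔ u.restrict p ∈ mu (iota L d))) :
    ∀ X : Set (Eval L), InS L X → (w ∈ X ↔ u ∈ mu X) := by
  obtain ⟨P₀, wmap, wmono⟩ := w
  have hP' : P₀ = u.P := hP
  subst hP'
  have H : MuHyp L M mu := ⟨hmuInS, hmu_inter, hmu_union, hmu_himp, hmu_bot, hmu_top⟩
  have hdual' : ∀ d : Set L, IsLowerSet d → ∀ p : u.P.carrier,
      (wmap p ∈ d ↔ u.restrict p ∈ mu (iota L d)) := fun d hd p => hdual d hd p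
  intro X hX
  have g := good_of_inS (wmono := wmono) H hdual' X hX u.P.root
  have h1 : (⟨u.P, wmap, wmono⟩ : Eval L).restrict u.P.root ∈ X ↔
      (⟨u.P, wmap, wmono⟩ : Eval L) ∈ X :=
    mem_iff_of_sim hX (fun n => sim_restrict_root _ n)
  have h2 : u.restrict u.P.root ∈ mu X ↔ u ∈ mu X :=
    mem_iff_of_sim (hmuInS X hX) (fun n => sim_restrict_root u n)
  exact h1.symm.trans (g.trans h2)
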